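/- For a triangle Δ ⊂ ℝ² with unit outward normals u_1,u_2,u_3 and heights h_1,h_2,h_3 over its circumcenter placed at the origin, the determinant of the 3×3 matrix with columns (u_i,h_i) equals Area(Δ)/Circumradius(Δ) (in absolute value). -/

import Mathlib

open MeasureTheory Set

private lemma auxp (a b xj yj xk yk h : ℝ) (hd : (xj-xk)^2+(yj-yk)^2 ≠ 0)
    (hu : a^2+b^2 = 1) (hj : a*xj+b*yj = h) (hk : a*xk+b*yk = h) :
    ∃ t : ℝ, a = -t*(yj-yk) ∧ b = t*(xj-xk) ∧ h = t*(xj*yk - xk*yj) ∧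
      t^2*((xj-xk)^2+(yj-yk)^2) = 1 := by
  set d1 := xj - xk with hd1
  set d2 := yj - yk with hd2
  have hperp : a*d1 + b*d2 = 0 := by rw [hd1, hd2]; linear_combination hj - hk
  refine ⟨(b*d1 - a*d2)/(d1^2+d2^2), ?_, ?_, ?_, ?_⟩
  · rw [show -((b*d1 - a*d2)/(d1^2+d2^2))*d2 = (-((b*d1 - a*d2)*d2))/(d1^2+d2^2) by ring,
      eq_div_iff hd]
    linear_combination d1*hperp
  · rw [div_mul_eq_mul_div, eq_div_iff hd]
    linear_combination d2*hperp
  · rw [div_mul_eq_mul_div, eq_div_iff hd]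
    linear_combination (-(d1^2+d2^2))*hj + (xj*d1 + yj*d2)*hperp
  · rw [div_pow, div_mul_eq_mul_div, div_eq_one_iff_eq (pow_ne_zero 2 hd)]
    linear_combination ((d1^2+d2^2))*((d1^2+d2^2)*hu - (a*d1+b*d2)*hperp)

private lemma prodD (x0 x1 x2 y0 y1 y2 R : ℝ) (hc0 : x0^2+y0^2 = R^2)
    (hc1 : x1^2+y1^2 = R^2) (hc2 : x2^2+y2^2 = R^2) :
    ((x1-x2)^2+(y1-y2)^2) * (((x0-x2)^2+(y0-y2)^2) * (((x0-x1)^2+(y0-y1)^2)))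
      = 4*R^2*((x1-x0)*(y2-y0)-(y1-y0)*(x2-x0))^2 := by
  linear_combination
    ((-3)*y2^2*R^2 + (1)*y2^4 + (6)*y1*y2*R^2 + (-2)*y1*y2^3 + (-3)*y1^2*R^2 + (2)*y1^2*y2^2 + (-2)*y1^3*y2 + (1)*y1^4 + (-2)*y0*y2^3 + (2)*y0*y1*y2^2 + (2)*y0*y1^2*y2 + (-2)*y0*y1^3 + (1)*y0^2*y2^2 + (-2)*y0^2*y1*y2 + (1)*y0^2*y1^2 + (1)*x2^2*R^2 + (2)*x2^2*y2^2 + (-2)*x2^2*y1*y2 + (2)*x2^2*y1^2 + (-2)*x2^2*y0*y2 + (-2)*x2^2*y0*y1 + (1)*x2^2*y0^2 + (1)*x2^4 + (-2)*x1*x2*R^2 + (2)*x1*x2*y2^2 + (-8)*x1*x2*y1*y2 + (2)*x1*x2*y1^2 + (4)*x1*x2*y0*y2 + (4)*x1*x2*y0*y1 + (-2)*x1*x2*y0^2 + (2)*x1*x2^3 + (1)*x1^2*R^2 + (2)*x1^2*y2^2 + (-2)*x1^2*y1*y2 + (2)*x1^2*y1^2 + (-2)*x1^2*y0*y2 + (-2)*x1^2*y0*y1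 + (1)*x1^2*y0^2 + (-6)*x1^2*x2^2 + (2)*x1^3*x2 + (1)*x1^4 + (-2)*x0*x2*y2^2 + (4)*x0*x2*y1*y2 + (-2)*x0*x2*y1^2 + (-2)*x0*x2^3 + (-2)*x0*x1*y2^2 + (4)*x0*x1*y1*y2 + (-2)*x0*x1*y1^2 + (2)*x0*x1*x2^2 + (2)*x0*x1^2*x2 + (-2)*x0*x1^3 + (1)*x0^2*y2^2 + (-2)*x0^2*y1*y2 + (1)*x0^2*y1^2 + (1)*x0^2*x2^2 + (-2)*x0^2*x1*x2 + (1)*x0^2*x1^2) * hc0 +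
    ((2)*R^4 + (-1)*y2^2*R^2 + (1)*y2^4 + (-2)*y1*y2*R^2 + (-2)*y1*y2^3 + (1)*y1^2*R^2 + (1)*y1^2*y2^2 + (4)*y0*y2*R^2 + (-2)*y0*y2^3 + (-2)*y0*y1*R^2 + (2)*y0*y1*y2^2 + (-2)*y0*y1^2*y2 + (-4)*y0^2*R^2 + (4)*y0^2*y1*y2 + (-5)*x2^2*R^2 + (2)*x2^2*y2^2 + (-2)*x2^2*y1*y2 + (1)*x2^2*y1^2 + (-2)*x2^2*y0*y2 + (-2)*x2^2*y0*y1 + (8)*x2^2*y0^2 + (1)*x2^4 + (2)*x1*x2*R^2 + (-2)*x1*x2*y2^2 + (4)*x1*x2*y0*y2 + (-4)*x1*x2*y0^2 + (-2)*x1*x2^3 + (1)*x1^2*R^2 + (1)*x1^2*y2^2 + (-2)*x1^2*y0*y2 + (1)*x1^2*x2^2 + (2)*x0*x2*y2^2 + (4)*x0*x2*y1*y2 + (-2)*x0*x2*y1^2 + (-8)*x0*x2*y0*y2 + (4)*x0*x2*y0*y1 + (2)*x0*x2^3 + (-2)*x0*x1*R^2 + (-2)*x0*x1*y2^2 + (4)*x0*x1*y0*y2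 + (2)*x0*x1*x2^2 + (-2)*x0*x1^2*x2) * hc1 +
    ((-2)*R^4 + (2)*y2^2*R^2 + (-4)*y1*y2*R^2 + (4)*y1^2*R^2 + (-4)*y0*y2*R^2 + (2)*y0*y1*R^2 + (-2)*y0*y1*y2^2 + (4)*y0*y1^2*y2 + (4)*y0^2*R^2 + (4)*y0^2*y1*y2 + (-8)*y0^2*y1^2 + (2)*x2^2*R^2 + (-2)*x2^2*y0*y1 + (4)*x1*x2*y0*y1 + (-4)*x1*x2*y0^2 + (-4)*x0*x2*y1^2 + (4)*x0*x2*y0*y1 + (2)*x0*x1*R^2 + (-2)*x0*x1*y2^2 + (4)*x0*x1*y1*y2 + (4)*x0*x1*y0*y2 + (-8)*x0*x1*y0*y1 + (-2)*x0*x1*x2^2) * hc2 +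
    0 * hc0
private lemma core (a0 a1 a2 b0 b1 b2 h0 h1 h2 x0 x1 x2 y0 y1 y2 R : ℝ)
    (hR : 0 < R)
    (hu0 : a0^2+b0^2 = 1) (hu1 : a1^2+b1^2 = 1) (hu2 : a2^2+b2^2 = 1)
    (hc0 : x0^2+y0^2 = R^2) (hc1 : x1^2+y1^2 = R^2) (hc2 : x2^2+y2^2 = R^2)
    (hne0 : (x1-x2)^2+(y1-y2)^2 ≠ 0)
    (hne1 : (x0-x2)^2+(y0-y2)^2 ≠ 0)
    (hne2 : (x0-x1)^2+(y0-y1)^2 ≠ 0)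
    (e01 : a0*x1+b0*y1 = h0) (e02 : a0*x2+b0*y2 = h0)
    (e10 : a1*x0+b1*y0 = h1) (e12 : a1*x2+b1*y2 = h1)
    (e20 : a2*x0+b2*y0 = h2) (e21 : a2*x1+b2*y1 = h2) :
    |a0*b1*h2 - a0*b2*h1 - a1*b0*h2 + a1*b2*h0 + a2*b0*h1 - a2*b1*h0| =
      |(x1-x0)*(y2-y0)-(y1-y0)*(x2-x0)| / 2 / R := by
  obtain ⟨t0, ha0, hb0, hh0, ht0⟩ := auxp a0 b0 x1 y1 x2 y2 h0 hne0 hu0 e01 e02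
  obtain ⟨t1, ha1, hb1, hh1, ht1⟩ := auxp a1 b1 x0 y0 x2 y2 h1 hne1 hu1 e10 e12
  obtain ⟨t2, ha2, hb2, hh2, ht2⟩ := auxp a2 b2 x0 y0 x1 y1 h2 hne2 hu2 e20 e21
  set C := (x1-x0)*(y2-y0)-(y1-y0)*(x2-x0) with hC
  set d := a0*b1*h2 - a0*b2*h1 - a1*b0*h2 + a1*b2*h0 + a2*b0*h1 - a2*b1*h0 with hd
  have hdet : d = -(t0*t1*t2) * C^2 := by
    rw [hd, ha0, hb0, hh0, ha1, hb1, hh1, ha2, hb2, hh2, hC]; ring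
  have hprod := prodD x0 x1 x2 y0 y1 y2 R hc0 hc1 hc2
  have hsq : (2*R*d)^2 = C^2 := by
    rw [hdet]
    linear_combination (-(C^2*t0^2*t1^2*t2^2))*hprod +
      (C^2*t1^2*((x0-x2)^2+(y0-y2)^2)*t2^2*((x0-x1)^2+(y0-y1)^2))*ht0 +
      (C^2*t2^2*((x0-x1)^2+(y0-y1)^2))*ht1 + C^2*ht2
  have habs : |2*R*d| = |C| := (sq_eq_sq_iff_abs_eq_abs _ _).mp hsq
  have h2R : |2*R*d| = 2*R*|d| := by
    rw [abs_mul, abs_of_pos (by linarith : (0:ℝ) < 2*R)]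
  have : 2*R*|d| = |C| := by rw [← h2R, habs]
  field_simp
  linarith

private lemma volS :
    volume {p : ℝ × ℝ | 0 ≤ p.1 ∧ 0 ≤ p.2 ∧ p.1 + p.2 ≤ 1} = ENNReal.ofReal (1/2) := by
  have hset : {p : ℝ × ℝ | 0 ≤ p.1 ∧ 0 ≤ p.2 ∧ p.1 + p.2 ≤ 1}
      = {p : ℝ × ℝ | p.1 ∈ Icc (0:ℝ) 1 ∧ p.2 ∈ Icc (0:ℝ) (1 - p.1)} := by
    ext p
    simp only [mem_setOf_eq, mem_Icc]
    constructor
    · rintro ⟨h1, h2, h3⟩; exact ⟨⟨h1, by linarith⟩, h2, by linarith⟩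
    · rintro ⟨⟨h1, h2⟩, h3, h4⟩; exact ⟨h1, h3, by linarith⟩
  have hmeas : MeasurableSet {p : ℝ × ℝ | p.1 ∈ Icc (0:ℝ) 1 ∧ p.2 ∈ Icc (0:ℝ) (1 - p.1)} := by
    have := measurableSet_region_between_cc (α := ℝ)
      (f := fun _ : ℝ => (0:ℝ)) (g := fun x : ℝ => 1 - x) measurable_const
      (by fun_prop) (measurableSet_Icc (a := (0:ℝ)) (b := (1:ℝ)))
    simpa using this
  rw [hset, Measure.volume_eq_prod, Measure.prod_apply hmeas]
  have hfun : (fun x : ℝ => volume (Prod.mk x ⁻¹' {p : ℝ × ℝ | p.1 ∈ Icc (0:ℝ) 1 ∧ p.2 ∈ Icc (0:ℝ) (1 - p.1)}))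
      = (Icc (0:ℝ) 1).indicator fun x => ENNReal.ofReal (1 - x) := by
    funext x
    rw [indicator_apply]
    by_cases hx : x ∈ Icc (0:ℝ) 1
    · have : Prod.mk x ⁻¹' {p : ℝ × ℝ | p.1 ∈ Icc (0:ℝ) 1 ∧ p.2 ∈ Icc (0:ℝ) (1 - p.1)}
          = Icc (0:ℝ) (1 - x) := by
        have hx' := mem_Icc.mp hx
        ext y; simp [mem_Icc, hx'.1, hx'.2]
      rw [this, if_pos hx, Real.volume_Icc, sub_zero]
    · have : Prod.mk x ⁻¹' {p : ℝ × ℝ | p.1 ∈ Icc (0:ℝ) 1 ∧ p.2 ∈ Icc (0:ℝ) (1 - p.1)}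
          = (∅ : Set ℝ) := by
        ext y
        simp only [mem_preimage, mem_setOf_eq, mem_empty_iff_false, iff_false, not_and]
        intro hxI _; exact absurd hxI hx
      rw [this, if_neg hx, measure_empty]
  rw [hfun, lintegral_indicator measurableSet_Icc _]
  rw [← ofReal_integral_eq_lintegral_ofReal]
  · rw [integral_Icc_eq_integral_Ioc, ← intervalIntegral.integral_of_le zero_le_one,
      intervalIntegral.integral_sub intervalIntegrable_const intervalIntegral.intervalIntegrable_id,
      intervalIntegral.integral_const, integral_id]
    norm_num
  · exact (Continuous.integrableOn_Icc (by fun_prop))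
  · exact (ae_restrict_iff' measurableSet_Icc).2 (ae_of_all _ fun x hx => by
      have := hx.2; simp; linarith)

private lemma volT :
    volume {p : EuclideanSpace ℝ (Fin 2) | 0 ≤ p 0 ∧ 0 ≤ p 1 ∧ p 0 + p 1 ≤ 1}
      = ENNReal.ofReal (1/2) := by
  have hS : MeasurableSet {p : ℝ × ℝ | 0 ≤ p.1 ∧ 0 ≤ p.2 ∧ p.1 + p.2 ≤ 1} := by
    have : {p : ℝ × ℝ | 0 ≤ p.1 ∧ 0 ≤ p.2 ∧ p.1 + p.2 ≤ 1}
        = {p : ℝ × ℝ | 0 ≤ p.1} ∩ ({p | 0 ≤ p.2} ∩ {p | p.1 + p.2 ≤ 1}) := by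
      ext p; simp [and_assoc]
    rw [this]
    exact ((isClosed_le continuous_const continuous_fst).measurableSet).inter
      (((isClosed_le continuous_const continuous_snd).measurableSet).inter
      ((isClosed_le (continuous_fst.add continuous_snd) continuous_const).measurableSet))

  have hS' : MeasurableSet {x : Fin 2 → ℝ | 0 ≤ x 0 ∧ 0 ≤ x 1 ∧ x 0 + x 1 ≤ 1} := by
    have : {x : Fin 2 → ℝ | 0 ≤ x 0 ∧ 0 ≤ x 1 ∧ x 0 + x 1 ≤ 1}
        = {x : Fin 2 → ℝ | 0 ≤ x 0} ∩ ({x | 0 ≤ x 1} ∩ {x | x 0 + x 1 ≤ 1}) := by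
      ext p; simp [and_assoc]
    rw [this]
    exact (measurableSet_le measurable_const (measurable_pi_apply 0)).inter
      ((measurableSet_le measurable_const (measurable_pi_apply 1)).inter
      (measurableSet_le ((measurable_pi_apply 0).add (measurable_pi_apply 1)) measurable_const))
  have h2 : volume {x : Fin 2 → ℝ | 0 ≤ x 0 ∧ 0 ≤ x 1 ∧ x 0 + x 1 ≤ 1}
      = volume {p : ℝ × ℝ | 0 ≤ p.1 ∧ 0 ≤ p.2 ∧ p.1 + p.2 ≤ 1} := by
    have := (volume_preserving_finTwoArrow ℝ).measure_preimage hS.nullMeasurableSet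
    convert this using 2
    rfl
  have h1 : volume {p : EuclideanSpace ℝ (Fin 2) | 0 ≤ p 0 ∧ 0 ≤ p 1 ∧ p 0 + p 1 ≤ 1}
      = volume {x : Fin 2 → ℝ | 0 ≤ x 0 ∧ 0 ≤ x 1 ∧ x 0 + x 1 ≤ 1} := by
    have := (EuclideanSpace.volume_preserving_symm_measurableEquiv_toLp (Fin 2)).measure_preimage
      hS'.nullMeasurableSet
    convert this using 2
    rfl
  rw [h1, h2, volS]
private lemma hullT :
    convexHull ℝ {(0 : EuclideanSpace ℝ (Fin 2)), EuclideanSpace.single 0 1,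
        EuclideanSpace.single 1 1}
      = {p : EuclideanSpace ℝ (Fin 2) | 0 ≤ p 0 ∧ 0 ≤ p 1 ∧ p 0 + p 1 ≤ 1} := by
  apply Subset.antisymm
  · apply convexHull_min
    · rintro z hz
      simp only [mem_insert_iff, mem_singleton_iff] at hz
      rcases hz with rfl | rfl | rfl <;>
        simp [EuclideanSpace.single_apply] <;> norm_num
    · rintro p ⟨hp1, hp2, hp3⟩ q ⟨hq1, hq2, hq3⟩ α β hα hβ hs
      have e0 : (α • p + β • q) 0 = α * p 0 + β * q 0 := by
        simp [PiLp.add_apply, PiLp.smul_apply, smul_eq_mul]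
      have e1 : (α • p + β • q) 1 = α * p 1 + β * q 1 := by
        simp [PiLp.add_apply, PiLp.smul_apply, smul_eq_mul]
      refine ⟨?_, ?_, ?_⟩
      · rw [e0]; nlinarith [mul_nonneg hα hp1, mul_nonneg hβ hq1]
      · rw [e1]; nlinarith [mul_nonneg hα hp2, mul_nonneg hβ hq2]
      · rw [e0, e1]; nlinarith [mul_nonneg hα hp1, mul_nonneg hβ hq1]
  · intro p hp
    obtain ⟨hp1, hp2, hp3⟩ := hp
    have hw : ∑ i, (![1 - p 0 - p 1, p 0, p 1]) i = 1 := by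
      simp [Fin.sum_univ_three]; ring
    have hmem := Finset.centerMass_mem_convexHull (Finset.univ : Finset (Fin 3))
      (w := ![1 - p 0 - p 1, p 0, p 1])
      (z := (![0, EuclideanSpace.single 0 1, EuclideanSpace.single 1 1] :
        Fin 3 → EuclideanSpace ℝ (Fin 2)))
      (s := {(0 : EuclideanSpace ℝ (Fin 2)), EuclideanSpace.single 0 1,
        EuclideanSpace.single 1 1})
      (fun i _ => by fin_cases i <;> simp <;> linarith)
      (by rw [hw]; norm_num)
      (fun i _ => by fin_cases i <;> simp)
    have hcm : (Finset.univ : Finset (Fin 3)).centerMass ![1 - p 0 - p 1, p 0, p 1]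
        ![0, EuclideanSpace.single 0 1, EuclideanSpace.single 1 1] = p := by
      rw [Finset.centerMass, hw, inv_one, one_smul]
      ext i
      fin_cases i <;>
        simp [Fin.sum_univ_three, EuclideanSpace.single_apply, PiLp.add_apply,
          PiLp.smul_apply, smul_eq_mul]
    rwa [hcm] at hmem

private lemma areaTri (v : Fin 3 → EuclideanSpace ℝ (Fin 2)) :
    volume (convexHull ℝ (Set.range v)) =
      ENNReal.ofReal
        (|(v 1 0 - v 0 0) * (v 2 1 - v 0 1) - (v 1 1 - v 0 1) * (v 2 0 - v 0 0)| / 2) := by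
  classical
  set A : Matrix (Fin 2) (Fin 2) ℝ :=
    !![v 1 0 - v 0 0, v 2 0 - v 0 0; v 1 1 - v 0 1, v 2 1 - v 0 1] with hA
  set L := Matrix.toEuclideanLin A with hL
  set s : Set (EuclideanSpace ℝ (Fin 2)) :=
    {0, EuclideanSpace.single 0 1, EuclideanSpace.single 1 1} with hs
  have hLcoord : ∀ (p : EuclideanSpace ℝ (Fin 2)) i, L p i = A i 0 * p 0 + A i 1 * p 1 := by
    intro p i
    show (A.mulVec p) i = _
    simp [Matrix.mulVec, dotProduct, Fin.sum_univ_two]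
  have hdetL : LinearMap.det L = (v 1 0 - v 0 0) * (v 2 1 - v 0 1)
      - (v 1 1 - v 0 1) * (v 2 0 - v 0 0) := by
    rw [hL, Matrix.toEuclideanLin_eq_toLin_orthonormal, LinearMap.det_toLin]
    rw [hA, Matrix.det_fin_two_of]; ring
  have hA00 : A 0 0 = v 1 0 - v 0 0 := rfl
  have hA01 : A 0 1 = v 2 0 - v 0 0 := rfl
  have hA10 : A 1 0 = v 1 1 - v 0 1 := rfl
  have hA11 : A 1 1 = v 2 1 - v 0 1 := rfl
  have him0 : v 0 + L 0 = v 0 := by simp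
  have him1 : v 0 + L (EuclideanSpace.single 0 1) = v 1 := by
    ext i
    have := hLcoord (EuclideanSpace.single 0 1) i
    fin_cases i <;> simp_all [EuclideanSpace.single_apply, hA00, hA01, hA10, hA11] <;> ring
  have him2 : v 0 + L (EuclideanSpace.single 1 1) = v 2 := by
    ext i
    have := hLcoord (EuclideanSpace.single 1 1) i
    fin_cases i <;> simp_all [EuclideanSpace.single_apply, hA00, hA01, hA10, hA11] <;> ring
  have hrange : Set.range v = (fun p => v 0 + L p) '' s := by
    have h3 : Set.range v = {v 0, v 1, v 2} := by
      ext w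
      constructor
      · rintro ⟨i, rfl⟩; fin_cases i <;> simp
      · rintro (rfl | rfl | rfl) <;> exact ⟨_, rfl⟩
    rw [h3, hs]
    rw [Set.image_insert_eq, Set.image_insert_eq, Set.image_singleton, him0, him1, him2]
  set f : EuclideanSpace ℝ (Fin 2) →ᵃ[ℝ] EuclideanSpace ℝ (Fin 2) :=
    ((AffineEquiv.constVAdd ℝ (EuclideanSpace ℝ (Fin 2)) (v 0)).toAffineMap).comp
      L.toAffineMap with hfdef
  have hf : ⇑f = fun p => v 0 + L p := by funext q; rfl
  have hhull : convexHull ℝ (Set.range v)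
      = (fun q => v 0 + q) '' (L '' (convexHull ℝ s)) := by
    rw [hrange, ← hf, ← AffineMap.image_convexHull, hf]
    exact (Set.image_image (fun q => v 0 + q) L (convexHull ℝ s)).symm
  rw [hhull]
  have htrans : volume ((fun q => v 0 + q) '' (L '' (convexHull ℝ s)))
      = volume (L '' (convexHull ℝ s)) := by
    have h : (fun q => v 0 + q) '' (L '' (convexHull ℝ s))
        = (fun q => -(v 0) + q) ⁻¹' (L '' (convexHull ℝ s)) := by
      ext z
      constructor
      · rintro ⟨y, hy, rfl⟩; simpa using hy
      · intro hz; exact ⟨-(v 0) + z, hz, by simp⟩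
    rw [h, measure_preimage_add]
  rw [htrans, Measure.addHaar_image_linearMap, hdetL, hullT, volT,
    ← ENNReal.ofReal_mul (abs_nonneg _), mul_one_div]

open scoped RealInnerProductSpace

/-- For a nondegenerate triangle `Δ ⊂ ℝ²` with circumcenter at the
origin (circumradius `R`), unit outward edge normals `u i` and heights `h i` over
the origin, the determinant of the `3×3` matrix with columns `(u i, h i)` equals, in
absolute value, `Area(Δ)/R`. -/
theorem stmt6 (u v : Fin 3 → EuclideanSpace ℝ (Fin 2)) (h : Fin 3 → ℝ) (R : ℝ)
    (hR : 0 < R) (hcirc : ∀ i, ‖v i‖ = R)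
    (haff : AffineIndependent ℝ v)
    (hunit : ∀ i, ‖u i‖ = 1)
    (hv : ∀ i k, k ≠ i → ⟪u i, v k⟫ = h i)
    (hout : ∀ i, ⟪u i, v i⟫ < h i)
    (M : Matrix (Fin 3) (Fin 3) ℝ)
    (hM : ∀ c, (∀ r : Fin 2, M r.castSucc c = u c r) ∧ M (Fin.last 2) c = h c) :
    |M.det| =
      (MeasureTheory.volume (convexHull ℝ (Set.range v))).toReal / R := by
  have hinner : ∀ (w z : EuclideanSpace ℝ (Fin 2)), ⟪w, z⟫ = w 0 * z 0 + w 1 * z 1 := by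
    intro w z
    simp [PiLp.inner_apply, RCLike.inner_apply, Fin.sum_univ_two, mul_comm]
  have hu : ∀ i, (u i 0)^2 + (u i 1)^2 = 1 := by
    intro i
    have h1 : ⟪u i, u i⟫ = 1 := by
      rw [real_inner_self_eq_norm_mul_norm, hunit]; norm_num
    rw [hinner] at h1
    linear_combination h1
  have hc : ∀ i, (v i 0)^2 + (v i 1)^2 = R^2 := by
    intro i
    have h1 : ⟪v i, v i⟫ = R * R := by
      rw [real_inner_self_eq_norm_mul_norm, hcirc]
    rw [hinner] at h1
    linear_combination h1
  have hvne : ∀ (j k : Fin 3), j ≠ k → (v j 0 - v k 0)^2 + (v j 1 - v k 1)^2 ≠ 0 := by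
    intro j k hjk hz
    apply haff.injective.ne hjk
    have e0 : v j 0 - v k 0 = 0 := by
      have h2 : (v j 0 - v k 0)^2 = 0 := by
        nlinarith [sq_nonneg (v j 1 - v k 1), sq_nonneg (v j 0 - v k 0)]
      exact pow_eq_zero_iff (by norm_num : (2:ℕ) ≠ 0) |>.mp h2
    have e1 : v j 1 - v k 1 = 0 := by
      have h2 : (v j 1 - v k 1)^2 = 0 := by
        nlinarith [sq_nonneg (v j 1 - v k 1), sq_nonneg (v j 0 - v k 0)]
      exact pow_eq_zero_iff (by norm_num : (2:ℕ) ≠ 0) |>.mp h2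
    ext i
    fin_cases i
    · exact sub_eq_zero.mp e0
    · exact sub_eq_zero.mp e1
  have e01 := hv 0 1 (by decide); rw [hinner] at e01
  have e02 := hv 0 2 (by decide); rw [hinner] at e02
  have e10 := hv 1 0 (by decide); rw [hinner] at e10
  have e12 := hv 1 2 (by decide); rw [hinner] at e12
  have e20 := hv 2 0 (by decide); rw [hinner] at e20
  have e21 := hv 2 1 (by decide); rw [hinner] at e21
  have hM0 : ∀ c, M 0 c = u c 0 := fun c => (hM c).1 0
  have hM1 : ∀ c, M 1 c = u c 1 := fun c => (hM c).1 1
  have hM2 : ∀ c, M 2 c = h c := fun c => (hM c).2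
  rw [areaTri v, ENNReal.toReal_ofReal (by positivity), Matrix.det_fin_three]
  simp only [hM0, hM1, hM2]
  exact core (u 0 0) (u 1 0) (u 2 0) (u 0 1) (u 1 1) (u 2 1) (h 0) (h 1) (h 2)
    (v 0 0) (v 1 0) (v 2 0) (v 0 1) (v 1 1) (v 2 1) R hR (hu 0) (hu 1) (hu 2)
    (hc 0) (hc 1) (hc 2) (hvne 1 2 (by decide)) (hvne 0 2 (by decide))
    (hvne 0 1 (by decide)) e01 e02 e10 e12 e20 e21
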